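/- arXiv:1912.09662 — 6 statements merged into one kernel-verified Lean document; each statement's English description precedes it below -/
import Mathlib

section
/- Let T be a spanning tree of a graph G=(V,E), and for an edge f ∈ E∖E(T) let T_f denote the path in T between the endpoints of f. For F ⊆ E∖E(T), let T_F = ∪_{f∈F} T_f be the forest of tree edges covered by F. Then the graph T_F ∪ F is 2-edge-connected if and only if T_F is a tree (i.e., connected). -/
open SimpleGraph
variable {V : Type*}
noncomputable def treeWalk (T : SimpleGraph V) (hT : T.IsTree) (u v : V) : T.Walk u v :=
  (hT.existsUnique_path u v).choose
noncomputable def pathSupport (T : SimpleGraph V) (hT : T.IsTree) (f : V × V) : Set V :=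
  {v | v ∈ (treeWalk T hT f.1 f.2).support}
noncomputable def pathEdges (T : SimpleGraph V) (hT : T.IsTree) (f : V × V) : Set (Sym2 V) :=
  {e | e ∈ (treeWalk T hT f.1 f.2).edges}
noncomputable def unionPaths (T : SimpleGraph V) (hT : T.IsTree) (F : Set (V × V)) : SimpleGraph V :=
  SimpleGraph.fromEdgeSet (⋃ f ∈ F, pathEdges T hT f)
def pairGraph (F : Set (V × V)) : SimpleGraph V :=
  SimpleGraph.fromEdgeSet {e | ∃ f ∈ F, e = s(f.1, f.2)}
def ConnOn (H : SimpleGraph V) : Prop :=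
  H.support.Nonempty ∧ ∀ u ∈ H.support, ∀ v ∈ H.support, H.Reachable u v
def TwoEdgeConnected (H : SimpleGraph V) : Prop :=
  H.support.Nontrivial ∧ (∀ u ∈ H.support, ∀ v ∈ H.support, H.Reachable u v) ∧
    ∀ e ∈ H.edgeSet, ∀ u ∈ H.support, ∀ v ∈ H.support, (H.deleteEdges {e}).Reachable u v

/-! ### Auxiliary lemmas -/

lemma treeWalk_isPath (T : SimpleGraph V) (hT : T.IsTree) (u v : V) :
    (treeWalk T hT u v).IsPath := (hT.existsUnique_path u v).choose_spec.1

lemma treeWalk_edges_subset {T : SimpleGraph V} {hT : T.IsTree} {F : Set (V × V)}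
    {f : V × V} (hf : f ∈ F) :
    ∀ e ∈ (treeWalk T hT f.1 f.2).edges, e ∈ (unionPaths T hT F).edgeSet := by
  intro e he
  have h1 : e ∈ T.edgeSet := (treeWalk T hT f.1 f.2).edges_subset_edgeSet he
  rw [unionPaths, edgeSet_fromEdgeSet]
  exact ⟨Set.mem_biUnion hf he, T.not_isDiag_of_mem_edgeSet h1⟩

/-- The tree path between the endpoints of `f ∈ F`, as a walk in `unionPaths`. -/
noncomputable def uWalk {T : SimpleGraph V} {hT : T.IsTree} {F : Set (V × V)}
    {f : V × V} (hf : f ∈ F) : (unionPaths T hT F).Walk f.1 f.2 :=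
  (treeWalk T hT f.1 f.2).transfer _ (treeWalk_edges_subset hf)

lemma unionPaths_le {T : SimpleGraph V} {hT : T.IsTree} {F : Set (V × V)} :
    unionPaths T hT F ≤ T := by
  intro u v huv
  rw [unionPaths, fromEdgeSet_adj] at huv
  obtain ⟨he, _⟩ := huv
  simp only [Set.mem_iUnion] at he
  obtain ⟨f, hf, hef⟩ := he
  exact (treeWalk T hT f.1 f.2).adj_of_mem_edges hef

lemma mem_support_of_walk {A : SimpleGraph V} {a b : V} (p : A.Walk a b) (h : a ≠ b) :
    a ∈ A.support := by
  cases p with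
  | nil => exact absurd rfl h
  | cons ha _ => exact ⟨_, ha⟩

lemma reachable_of_forall {A B : SimpleGraph V} (h : ∀ x y, A.Adj x y → B.Reachable x y)
    {x y : V} (hxy : A.Reachable x y) : B.Reachable x y := by
  obtain ⟨p⟩ := hxy
  induction p with
  | nil => exact Reachable.refl _
  | cons ha _ ih => exact (h _ _ ha).trans ih

lemma deleteEdges_mono' {A B : SimpleGraph V} (h : A ≤ B) (s : Set (Sym2 V)) :
    A.deleteEdges s ≤ B.deleteEdges s := by
  intro u v huv
  rw [deleteEdges_adj] at huv ⊢
  exact ⟨h huv.1, huv.2⟩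

lemma walk_split {A : SimpleGraph V} {a b x y : V} (p : A.Walk x y)
    (hnd : p.edges.Nodup) (he : s(a, b) ∈ p.edges) :
    ((A.deleteEdges {s(a, b)}).Reachable x a ∧ (A.deleteEdges {s(a, b)}).Reachable b y) ∨
    ((A.deleteEdges {s(a, b)}).Reachable x b ∧ (A.deleteEdges {s(a, b)}).Reachable a y) := by
  induction p with
  | nil => simp at he
  | @cons x c y h q ih =>
    rw [Walk.edges_cons, List.nodup_cons] at hnd
    rw [Walk.edges_cons, List.mem_cons] at he
    rcases he with he | he
    · have hq : ∀ e ∈ q.edges, e ∉ ({s(a, b)} : Set (Sym2 V)) := by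
        intro e hee
        simp only [Set.mem_singleton_iff]
        rintro rfl
        rw [he] at hee
        exact hnd.1 hee
      have hr : (A.deleteEdges {s(a, b)}).Reachable c y := ⟨q.toDeleteEdges _ hq⟩
      rcases Sym2.eq_iff.mp he with ⟨rfl, rfl⟩ | ⟨rfl, rfl⟩
      · exact Or.inl ⟨Reachable.refl _, hr⟩
      · exact Or.inr ⟨Reachable.refl _, hr⟩
    · have hne : s(x, c) ≠ s(a, b) := fun hc => hnd.1 (hc ▸ he)
      have hxc : (A.deleteEdges {s(a, b)}).Adj x c := by
        rw [deleteEdges_adj]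
        exact ⟨h, by simpa using hne⟩
      rcases ih hnd.2 he with ⟨h1, h2⟩ | ⟨h1, h2⟩
      · exact Or.inl ⟨hxc.reachable.trans h1, h2⟩
      · exact Or.inr ⟨hxc.reachable.trans h1, h2⟩

theorem stmt0 (G T : SimpleGraph V) (hle : T ≤ G) (hT : T.IsTree)
    (F : Set (V × V)) (hF : ∀ f ∈ F, G.Adj f.1 f.2 ∧ ¬ T.Adj f.1 f.2) :
    TwoEdgeConnected (unionPaths T hT F ⊔ pairGraph F) ↔ ConnOn (unionPaths T hT F) := by
  set U := unionPaths T hT F with hUdef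
  set P := pairGraph F with hPdef
  -- edges of P are never edges of U (they are non-tree edges)
  have hPU : ∀ e, e ∈ P.edgeSet → e ∉ U.edgeSet := by
    intro e heP heU
    have heT : e ∈ T.edgeSet := edgeSet_mono unionPaths_le heU
    rw [hPdef, pairGraph, edgeSet_fromEdgeSet] at heP
    obtain ⟨⟨f, hf, rfl⟩, _⟩ := heP
    exact (hF f hf).2 ((T.mem_edgeSet).mp heT)
  -- support of the sup equals support of U
  have hsup : (U ⊔ P).support = U.support := by
    ext v
    rw [mem_support, mem_support]
    constructor
    · rintro ⟨w, hvw⟩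
      rcases hvw with hvw | hvw
      · exact ⟨w, hvw⟩
      · rw [hPdef, pairGraph, fromEdgeSet_adj] at hvw
        obtain ⟨⟨f, hf, heq⟩, hne⟩ := hvw
        have hf12 : f.1 ≠ f.2 := (hF f hf).1.ne
        rcases Sym2.eq_iff.mp heq with ⟨rfl, rfl⟩ | ⟨rfl, rfl⟩
        · exact mem_support_of_walk (uWalk hf) hf12
        · exact mem_support_of_walk (uWalk hf).reverse hf12.symm
    · rintro ⟨w, hvw⟩
      exact ⟨w, Or.inl hvw⟩
  constructor
  · rintro ⟨hnt, hcon, _⟩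
    rw [hsup] at hnt hcon
    refine ⟨hnt.nonempty, fun u hu v hv => ?_⟩
    refine reachable_of_forall (fun x y hxy => ?_) (hcon u hu v hv)
    rcases hxy with hxy | hxy
    · exact hxy.reachable
    · rw [hPdef, pairGraph, fromEdgeSet_adj] at hxy
      obtain ⟨⟨f, hf, heq⟩, _⟩ := hxy
      have hR : U.Reachable f.1 f.2 := ⟨uWalk hf⟩
      rcases Sym2.eq_iff.mp heq with ⟨rfl, rfl⟩ | ⟨rfl, rfl⟩
      · exact hR
      · exact hR.symm
  · rintro ⟨⟨u₀, hu₀⟩, hcon⟩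
    -- key claim: after deleting any edge of `U ⊔ P`, adjacent vertices of `U` stay reachable
    have key : ∀ e ∈ (U ⊔ P).edgeSet, ∀ x y, U.Adj x y →
        (((U ⊔ P).deleteEdges {e}).Reachable x y) := by
      intro e he x y hxy
      by_cases hc : s(x, y) = e
      · subst hc
        -- e is an edge of U, lying on some tree path `treeWalk f₀`
        have hxyU : s(x, y) ∈ U.edgeSet := (U.mem_edgeSet).mpr hxy
        have hxyP : s(x, y) ∉ P.edgeSet := fun hp => hPU _ hp hxyU
        have hxy' := hxy
        rw [hUdef, unionPaths, fromEdgeSet_adj] at hxy'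
        obtain ⟨hmem, _⟩ := hxy'
        simp only [Set.mem_iUnion] at hmem
        obtain ⟨f₀, hf₀, hef₀⟩ := hmem
        -- split the transferred walk at the edge s(x,y)
        have hnd : (uWalk (hT := hT) hf₀).edges.Nodup := by
          rw [uWalk, Walk.edges_transfer]
          exact (treeWalk_isPath T hT f₀.1 f₀.2).isTrail.edges_nodup
        have hein : s(x, y) ∈ (uWalk (hT := hT) hf₀).edges := by
          rw [uWalk, Walk.edges_transfer]; exact hef₀
        have hsplit := walk_split (uWalk (hT := hT) hf₀) hnd hein
        have hmono : U.deleteEdges {s(x, y)} ≤ (U ⊔ P).deleteEdges {s(x, y)} :=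
          deleteEdges_mono' le_sup_left _
        -- the pair edge f₀ survives the deletion
        have hpadj : ((U ⊔ P).deleteEdges {s(x, y)}).Adj f₀.1 f₀.2 := by
          rw [deleteEdges_adj]
          refine ⟨Or.inr ?_, ?_⟩
          · rw [hPdef, pairGraph, fromEdgeSet_adj]
            exact ⟨⟨f₀, hf₀, rfl⟩, (hF f₀ hf₀).1.ne⟩
          · simp only [Set.mem_singleton_iff]
            intro hcc
            exact hxyP ((P.mem_edgeSet).mpr (by
              rw [hPdef, pairGraph, fromEdgeSet_adj]
              exact ⟨⟨f₀, hf₀, hcc.symm⟩, hxy.ne⟩))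
        rcases hsplit with ⟨h1, h2⟩ | ⟨h1, h2⟩
        · exact ((Reachable.mono hmono h1).symm.trans (hpadj.reachable.trans (Reachable.mono hmono h2).symm))
        · exact ((Reachable.mono hmono h2).trans (hpadj.symm.reachable.trans (Reachable.mono hmono h1)))
      · exact (Adj.reachable (by
          rw [deleteEdges_adj]
          exact ⟨Or.inl hxy, by simpa using hc⟩))
    refine ⟨?_, ?_, ?_⟩
    · rw [hsup]
      obtain ⟨w, huw⟩ := hu₀
      exact ⟨u₀, ⟨w, huw⟩, w, ⟨u₀, (show U.Adj u₀ w from huw).symm⟩, (show U.Adj u₀ w from huw).ne⟩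
    · intro u hu v hv
      rw [hsup] at hu hv
      exact (hcon u hu v hv).mono le_sup_left
    · intro e he u hu v hv
      rw [hsup] at hu hv
      exact reachable_of_forall (fun x y hxy => key e he x y hxy) (hcon u hu v hv)
end

section
/- Let T be a spanning tree of a graph G=(V,E). If (S,J) is a 2-edge-connected subgraph of G, then the forest T_{J∖E(T)} (the union of tree paths T_f over edges f ∈ J∖E(T)) is a tree, i.e., connected. -/
open SimpleGraph
variable {V : Type*}
lemma treeWalk_of_adj (T : SimpleGraph V) (hT : T.IsTree) {u v : V} (h : T.Adj u v) :
    treeWalk T hT u v = Walk.cons h Walk.nil := by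
  have hp : (Walk.cons h Walk.nil).IsPath := by
    simp [Walk.cons_isPath_iff, h.ne]
  exact ((hT.existsUnique_path u v).choose_spec.2 _ hp).symm

lemma reachable_of_adj_imp {A B : SimpleGraph V} (h : ∀ x y, A.Adj x y → B.Reachable x y)
    {a b : V} (hr : A.Reachable a b) : B.Reachable a b := by
  obtain ⟨w⟩ := hr
  induction w with
  | nil => exact Reachable.refl _
  | cons ha p ih => exact (h _ _ ha).trans ih

lemma exists_cross {A : SimpleGraph V} (P : V → Prop) {a b : V} (w : A.Walk a b) :
    ¬ P b → P a → ∃ x y, A.Adj x y ∧ P x ∧ ¬ P y := by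
  induction w with
  | nil => exact fun hb ha => absurd ha hb
  | @cons x y z hadj p ih =>
    intro hb ha
    by_cases hc : P y
    · exact ih hb hc
    · exact ⟨x, y, hadj, ha, hc⟩

lemma reach_side_aux {T : SimpleGraph V} {u v x c : V} (w : T.Walk x c) :
    ((T.deleteEdges {s(u, v)}).Reachable c u ∨ (T.deleteEdges {s(u, v)}).Reachable c v) →
    ((T.deleteEdges {s(u, v)}).Reachable x u ∨ (T.deleteEdges {s(u, v)}).Reachable x v) := by
  induction w with
  | nil => exact id
  | @cons a b c hadj p ih =>
    intro h
    have h' := ih h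
    by_cases he : s(a, b) = s(u, v)
    · rcases Sym2.eq_iff.mp he with ⟨rfl, rfl⟩ | ⟨rfl, rfl⟩
      · exact Or.inl (Reachable.refl _)
      · exact Or.inr (Reachable.refl _)
    · have hadj' : (T.deleteEdges {s(u, v)}).Adj a b := by
        rw [deleteEdges_adj]
        exact ⟨hadj, by simpa using he⟩
      rcases h' with h' | h'
      · exact Or.inl (hadj'.reachable.trans h')
      · exact Or.inr (hadj'.reachable.trans h')

lemma reach_side {T : SimpleGraph V} (hT : T.IsTree) (u v x : V) :
    (T.deleteEdges {s(u, v)}).Reachable x u ∨ (T.deleteEdges {s(u, v)}).Reachable x v := by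
  obtain ⟨w⟩ := hT.isConnected.preconnected x u
  exact reach_side_aux w (Or.inl (Reachable.refl _))

lemma not_reach_del {T : SimpleGraph V} (hT : T.IsTree) {u v : V} (h : T.Adj u v) :
    ¬ (T.deleteEdges {s(u, v)}).Reachable u v := by
  have hbr : T.IsBridge s(u, v) := isAcyclic_iff_forall_adj_isBridge.mp hT.IsAcyclic h
  exact isBridge_iff.mp hbr

lemma del_reach_of_not_mem {T : SimpleGraph V} (hT : T.IsTree) {u v a b : V}
    (h : s(u, v) ∉ (treeWalk T hT a b).edges) :
    (T.deleteEdges {s(u, v)}).Reachable a b := by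
  refine ⟨(treeWalk T hT a b).transfer _ ?_⟩
  intro e he
  rw [edgeSet_deleteEdges]
  refine ⟨Walk.edges_subset_edgeSet _ he, ?_⟩
  intro hmem
  rw [Set.mem_singleton_iff] at hmem
  exact h (hmem ▸ he)

/-- If `(S, J)` is a 2-edge-connected subgraph of `G` (with spanning tree `T`),
then the union of tree paths of the non-tree edges of `J` is a tree (connected). -/
theorem stmt1 (G T : SimpleGraph V) (hle : T ≤ G) (hT : T.IsTree)
    (S : Set V) (J : Set (V × V))
    (hJG : ∀ e ∈ J, G.Adj e.1 e.2) (hJS : ∀ e ∈ J, e.1 ∈ S ∧ e.2 ∈ S)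
    (h2ec : TwoEdgeConnected (pairGraph J)) :
    ConnOn (unionPaths T hT {e ∈ J | ¬ T.Adj e.1 e.2}) := by
  classical
  set F := {e ∈ J | ¬ T.Adj e.1 e.2} with hF
  set H := unionPaths T hT F with hH
  -- edges of tree walks of members of F are edges of H
  have hsubH : ∀ f ∈ F, ∀ e ∈ (treeWalk T hT f.1 f.2).edges, e ∈ H.edgeSet := by
    intro f hf e he
    rw [hH, unionPaths, edgeSet_fromEdgeSet]
    refine ⟨Set.mem_iUnion₂.mpr ⟨f, hf, he⟩, ?_⟩
    exact T.not_isDiag_of_mem_edgeSet (Walk.edges_subset_edgeSet _ he)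
  -- transfer of tree walks of members of F into H
  have hWalkH : ∀ f ∈ F, ∀ z ∈ (treeWalk T hT f.1 f.2).support, H.Reachable f.1 z := by
    intro f hf z hz
    have hz' : z ∈ ((treeWalk T hT f.1 f.2).transfer H (hsubH f hf)).support := by
      rw [Walk.support_transfer]; exact hz
    exact ⟨((treeWalk T hT f.1 f.2).transfer H (hsubH f hf)).takeUntil z hz'⟩
  have hFreach : ∀ f ∈ F, H.Reachable f.1 f.2 :=
    fun f hf => hWalkH f hf f.2 (Walk.end_mem_support _)
  -- key: every tree edge of J is an edge of H
  have key_tree : ∀ g ∈ J, T.Adj g.1 g.2 → H.Adj g.1 g.2 := by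
    rintro ⟨u, v⟩ hgJ hadj
    simp only at hadj ⊢
    have hne : u ≠ v := hadj.ne
    have hPG : (pairGraph J).Adj u v := by
      rw [pairGraph, fromEdgeSet_adj]
      exact ⟨⟨(u, v), hgJ, rfl⟩, hne⟩
    have heE : s(u, v) ∈ (pairGraph J).edgeSet := ((pairGraph J).mem_edgeSet).mpr hPG
    obtain ⟨W⟩ := h2ec.2.2 s(u, v) heE u ⟨v, hPG⟩ v ⟨u, hPG.symm⟩
    have hbr : ¬ (T.deleteEdges {s(u, v)}).Reachable u v := not_reach_del hT hadj
    have hPv : ¬ (T.deleteEdges {s(u, v)}).Reachable v u := fun h => hbr h.symm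
    obtain ⟨x, y, hxy, hPx, hPy⟩ :=
      exists_cross (fun z => (T.deleteEdges {s(u, v)}).Reachable z u) W hPv (Reachable.refl u)
    rw [deleteEdges_adj] at hxy
    obtain ⟨hxy1, hxy2⟩ := hxy
    rw [pairGraph, fromEdgeSet_adj] at hxy1
    obtain ⟨⟨g, hgJ', hg⟩, hnexy⟩ := hxy1
    have hyv : (T.deleteEdges {s(u, v)}).Reachable y v :=
      (reach_side hT u v y).resolve_left hPy
    -- crossing: s(u,v) lies on the tree walk of g
    have hcross : s(u, v) ∈ (treeWalk T hT g.1 g.2).edges := by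
      by_contra hnot
      have hr : (T.deleteEdges {s(u, v)}).Reachable g.1 g.2 := del_reach_of_not_mem hT hnot
      rcases Sym2.eq_iff.mp hg with ⟨h1, h2⟩ | ⟨h1, h2⟩
      · subst h1; subst h2
        exact hbr (hPx.symm.trans (hr.trans hyv))
      · subst h1; subst h2
        exact hbr (hPx.symm.trans (hr.symm.trans hyv))
    -- g is a non-tree edge
    have hgF : g ∈ F := by
      refine ⟨hgJ', fun hadj' => ?_⟩
      rw [treeWalk_of_adj T hT hadj'] at hcross
      simp only [Walk.edges_cons, Walk.edges_nil, List.mem_singleton] at hcross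
      exact hxy2 (by rw [Set.mem_singleton_iff, hg, hcross])
    rw [hH, unionPaths, fromEdgeSet_adj]
    exact ⟨Set.mem_iUnion₂.mpr ⟨g, hgF, hcross⟩, hne⟩
  -- every edge of J has H-reachable endpoints
  have key_J : ∀ g ∈ J, H.Reachable g.1 g.2 := by
    intro g hgJ
    by_cases hadj : T.Adj g.1 g.2
    · exact (key_tree g hgJ hadj).reachable
    · exact hFreach g ⟨hgJ, hadj⟩
  have key_reach : ∀ x y, (pairGraph J).Adj x y → H.Reachable x y := by
    intro x y hxy
    rw [pairGraph, fromEdgeSet_adj] at hxy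
    obtain ⟨⟨g, hgJ, hg⟩, -⟩ := hxy
    have hr := key_J g hgJ
    rcases Sym2.eq_iff.mp hg with ⟨h1, h2⟩ | ⟨h1, h2⟩
    · subst h1; subst h2; exact hr
    · subst h1; subst h2; exact hr.symm
  -- endpoints of members of F are in the support of pairGraph J
  have hsuppPG : ∀ f ∈ F, f.1 ∈ (pairGraph J).support := by
    intro f hf
    refine ⟨f.2, ?_⟩
    show (pairGraph J).Adj f.1 f.2
    rw [pairGraph, fromEdgeSet_adj]
    exact ⟨⟨f, hf.1, rfl⟩, (hJG f hf.1).ne⟩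
  have hreach1 : ∀ f ∈ F, ∀ g ∈ F, H.Reachable f.1 g.1 := by
    intro f hf g hg
    exact reachable_of_adj_imp key_reach
      (h2ec.2.1 f.1 (hsuppPG f hf) g.1 (hsuppPG g hg))
  -- every support vertex of H lies on some tree walk of a member of F
  have hsupp : ∀ z ∈ H.support, ∃ f ∈ F, H.Reachable f.1 z := by
    intro z hz
    obtain ⟨c, hzc⟩ := hz
    change H.Adj z c at hzc
    rw [hH, unionPaths, fromEdgeSet_adj] at hzc
    obtain ⟨hmem, -⟩ := hzc
    obtain ⟨f, hfF, hfe⟩ := Set.mem_iUnion₂.mp hmem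
    exact ⟨f, hfF, hWalkH f hfF z (Walk.fst_mem_support_of_mem_edges _ hfe)⟩
  constructor
  · -- nonempty support
    obtain ⟨a, ha, b, hb, hab⟩ := h2ec.1
    obtain ⟨c, hac⟩ := ha
    change (pairGraph J).Adj a c at hac
    rw [pairGraph, fromEdgeSet_adj] at hac
    obtain ⟨⟨⟨u0, v0⟩, hfJ, -⟩, -⟩ := hac
    have hr := key_J (u0, v0) hfJ
    have hnef : u0 ≠ v0 := (hJG (u0, v0) hfJ).ne
    obtain ⟨w⟩ := hr
    cases w with
    | nil => exact absurd rfl hnef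
    | cons h p => exact ⟨u0, _, h⟩
  · intro u hu v hv
    obtain ⟨f, hf, hru⟩ := hsupp u hu
    obtain ⟨g, hg, hrv⟩ := hsupp v hv
    exact hru.symm.trans ((hreach1 f hf g hg).trans hrv)
end

section
/- Any edge-minimal 2-edge-connected graph (S,J) satisfies |S| ≤ |J| ≤ 2(|S|−1). -/
open SimpleGraph
variable {V : Type*}

namespace MyAux

lemma walk_support_mem {G : SimpleGraph V} {u v : V} (w : G.Walk u v) :
    ∀ x ∈ w.support, x ∈ G.support ∨ x = v := by
  induction w with
  | nil => intro x hx; right; simpa using hx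
  | cons h p ih =>
    intro x hx
    rcases List.mem_cons.mp (by simpa using hx) with rfl | hx'
    · exact Or.inl ⟨_, h⟩
    · exact ih x hx'

lemma walk_crossing {G : SimpleGraph V} {A : Set V} {u v : V} (w : G.Walk u v)
    (hu : u ∈ A) (hv : v ∉ A) :
    ∃ a b, G.Adj a b ∧ a ∈ A ∧ b ∉ A ∧ s(a, b) ∈ w.edges := by
  induction w with
  | nil => exact absurd hu hv
  | @cons a b c h p ih =>
    by_cases hb : b ∈ A
    · obtain ⟨x, y, hxy, hx, hy, he⟩ := ih hb hv
      exact ⟨x, y, hxy, hx, hy, by simp [he]⟩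
    · exact ⟨a, b, h, hu, hb, by simp⟩

lemma reachable_induce_of_walk {G : SimpleGraph V} {S : Set V} {u v : V} (w : G.Walk u v)
    (hS : ∀ x ∈ w.support, x ∈ S) (hu : u ∈ S) (hv : v ∈ S) :
    (G.induce S).Reachable ⟨u, hu⟩ ⟨v, hv⟩ := by
  induction w with
  | nil => rfl
  | @cons a b c h p ih =>
    have hb : b ∈ S := hS b (by simp)
    have h1 : (G.induce S).Adj ⟨a, hu⟩ ⟨b, hb⟩ := h
    exact (h1.reachable).trans (ih (fun x hx => hS x (by simp [hx])) hb hv)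

lemma induce_deleteEdges_eq (H : SimpleGraph V) (S : Set V) (s : Set (Sym2 ↥S)) :
    (H.deleteEdges (Sym2.map (Subtype.val : ↥S → V) '' s)).induce S =
      (H.induce S).deleteEdges s := by
  ext ⟨a, ha⟩ ⟨b, hb⟩
  simp only [comap_adj, Function.Embedding.coe_subtype, deleteEdges_adj]
  constructor
  · rintro ⟨hadj, hmem⟩
    refine ⟨hadj, fun hc => hmem ?_⟩
    exact ⟨s(⟨a, ha⟩, ⟨b, hb⟩), hc, rfl⟩
  · rintro ⟨hadj, hmem⟩
    refine ⟨hadj, fun hc => hmem ?_⟩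
    obtain ⟨e, he, heq⟩ := hc
    have : e = s(⟨a, ha⟩, ⟨b, hb⟩) := by
      apply Sym2.map.injective Subtype.val_injective
      rw [heq]
      rfl
    exact this ▸ he

lemma reach_transfer {H : SimpleGraph V} {S : Set V} (hS : H.support ⊆ S)
    (s : Set (Sym2 ↥S)) (u v : ↥S) :
    ((H.induce S).deleteEdges s).Reachable u v ↔
      (H.deleteEdges (Sym2.map (Subtype.val : ↥S → V) '' s)).Reachable ↑u ↑v := by
  rw [← induce_deleteEdges_eq]
  constructor
  · intro h
    exact h.map ⟨Subtype.val, fun h => h⟩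
  · rintro ⟨w⟩
    have hsupp : ∀ x ∈ w.support, x ∈ S := by
      intro x hx
      rcases walk_support_mem w x hx with h | rfl
      · exact hS (support_mono (deleteEdges_le _) h)
      · exact v.2
    have := reachable_induce_of_walk w hsupp u.2 v.2
    simpa using this

lemma reachable_deleteEdge_of_reachable {G : SimpleGraph V} {v w : V}
    (hvw : (G.deleteEdges {s(v, w)}).Reachable v w) {x y : V} (hxy : G.Reachable x y) :
    (G.deleteEdges {s(v, w)}).Reachable x y := by
  obtain ⟨p⟩ := hxy
  induction p with
  | nil => rfl
  | @cons a b c h p ih =>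
    refine Reachable.trans ?_ ih
    by_cases he : s(a, b) = s(v, w)
    · rcases Sym2.eq_iff.mp he with ⟨rfl, rfl⟩ | ⟨rfl, rfl⟩
      · exact hvw
      · exact hvw.symm
    · exact Adj.reachable (by simp [h, he])

theorem exists_spanning_tree {W : Type*} [Fintype W] (G : SimpleGraph W) (h : G.Connected) :
    ∃ T ≤ G, T.IsTree := by
  classical
  obtain ⟨n, hn⟩ : ∃ n, G.edgeSet.ncard ≤ n := ⟨_, le_rfl⟩
  induction n generalizing G with
  | zero =>
    refine ⟨G, le_rfl, h, ?_⟩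
    intro u c hc
    obtain ⟨e, he⟩ : ∃ e, e ∈ c.edges := by
      cases c with
      | nil => exact absurd rfl hc.ne_nil
      | @cons _ bb _ hh pp => exact ⟨s(u, bb), by simp⟩
    have : e ∈ G.edgeSet := c.edges_subset_edgeSet he
    have : 0 < G.edgeSet.ncard := (Set.ncard_pos (Set.toFinite _)).mpr ⟨e, this⟩
    omega
  | succ n ih =>
    by_cases hac : G.IsAcyclic
    · exact ⟨G, le_rfl, h, hac⟩
    · simp only [IsAcyclic, not_forall, not_not] at hac
      obtain ⟨u, c, hc⟩ := hac
      obtain ⟨a, b, hab, he⟩ : ∃ a b, G.Adj a b ∧ s(a, b) ∈ c.edges := by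
        cases c with
        | nil => exact absurd rfl hc.ne_nil
        | @cons _ b _ h p => exact ⟨_, b, h, by simp⟩
      have hreach : (G \ fromEdgeSet {s(a, b)}).Reachable a b :=
        (adj_and_reachable_delete_edges_iff_exists_cycle.mpr ⟨u, c, hc, he⟩).2
      have hreach' : (G.deleteEdges {s(a, b)}).Reachable a b := hreach
      have hconn' : (G.deleteEdges {s(a, b)}).Connected := by
        rw [connected_iff]
        exact ⟨fun x y => reachable_deleteEdge_of_reachable hreach' (h.preconnected x y),
          h.nonempty⟩
      have hcard : (G.deleteEdges {s(a, b)}).edgeSet.ncard ≤ n := by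
        rw [edgeSet_deleteEdges]
        have h1 : G.edgeSet.ncard ≤ n + 1 := hn
        have h2 : (G.edgeSet \ {s(a, b)}).ncard < G.edgeSet.ncard :=
          Set.ncard_diff_singleton_lt_of_mem hab (Set.toFinite _)
        omega
      obtain ⟨T, hT1, hT2⟩ := ih _ hconn' hcard
      exact ⟨T, hT1.trans (deleteEdges_le _), hT2⟩

def xcut {W : Type*} (A : Set W) : Set (Sym2 W) := {e | ∃ a b, e = s(a, b) ∧ a ∈ A ∧ b ∉ A}

lemma mem_xcut_iff {W : Type*} {A : Set W} {a b : W} :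
    s(a, b) ∈ xcut A ↔ ((a ∈ A ∧ b ∉ A) ∨ (b ∈ A ∧ a ∉ A)) := by
  constructor
  · rintro ⟨x, y, hxy, hx, hy⟩
    rcases Sym2.eq_iff.mp hxy with ⟨rfl, rfl⟩ | ⟨rfl, rfl⟩
    · exact Or.inl ⟨hx, hy⟩
    · exact Or.inr ⟨hx, hy⟩
  · rintro (⟨h1, h2⟩ | ⟨h1, h2⟩)
    · exact ⟨a, b, rfl, h1, h2⟩
    · exact ⟨b, a, Sym2.eq_swap.symm, h1, h2⟩

lemma cut_nonempty {W : Type*} {G : SimpleGraph W} (h : G.Preconnected) {A : Set W}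
    (hA : A.Nonempty) (hA' : Aᶜ.Nonempty) :
    ∃ e ∈ G.edgeSet, e ∈ xcut A := by
  obtain ⟨u, hu⟩ := hA
  obtain ⟨v, hv⟩ := hA'
  obtain ⟨p⟩ := h u v
  obtain ⟨a, b, hab, ha, hb, -⟩ := walk_crossing p hu hv
  exact ⟨s(a, b), hab, mem_xcut_iff.mpr (Or.inl ⟨ha, hb⟩)⟩

lemma cut_subset_deleted {W : Type*} {G : SimpleGraph W} {s : Set (Sym2 W)} {u : W} :
    G.edgeSet ∩ xcut {x | (G.deleteEdges s).Reachable u x} ⊆ s := by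
  rintro e ⟨he, hx⟩
  obtain ⟨a, b, rfl, ha, hb⟩ := hx
  by_contra hes
  have hadj : (G.deleteEdges s).Adj a b := by
    simp only [deleteEdges_adj]
    exact ⟨(SimpleGraph.mem_edgeSet G).mp he, hes⟩
  exact hb ((ha : (G.deleteEdges s).Reachable u a).trans hadj.reachable)

lemma exists_adj_of_connected {W : Type*} {T : SimpleGraph W} (hT : T.Preconnected)
    [Nontrivial W] (v : W) : ∃ w, T.Adj v w := by
  obtain ⟨u, hu⟩ := exists_ne v
  obtain ⟨p⟩ := hT v u
  cases p with
  | nil => exact absurd rfl hu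
  | cons h _ => exact ⟨_, h⟩

lemma xor_cross (pA qA pB qB : Prop) (hx : Xor' pA pB) (hy : ¬Xor' qA qB) :
    ((pA ∧ ¬qA) ∨ (qA ∧ ¬pA)) ∨ ((pB ∧ ¬qB) ∨ (qB ∧ ¬pB)) := by
  by_cases pA <;> by_cases qA <;> by_cases pB <;> by_cases qB <;> simp_all [Xor']

lemma xor_cross_both (pA qA pB qB : Prop) (h1 : (pA ∧ ¬qA) ∨ (qA ∧ ¬pA))
    (h2 : (pB ∧ ¬qB) ∨ (qB ∧ ¬pB)) (hx : Xor' pA pB) (hy : ¬Xor' qA qB) : False := by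
  by_cases pA <;> by_cases qA <;> by_cases pB <;> by_cases qB <;> simp_all [Xor']

end MyAux

set_option maxHeartbeats 1000000 in
/-- Any edge-minimal 2-edge-connected graph `(S, J)` satisfies `|S| ≤ |J| ≤ 2(|S| - 1)`,
where `S` is its vertex set (support) and `J` its edge set. -/
theorem stmt5 [Fintype V] (H : SimpleGraph V) (h2ec : TwoEdgeConnected H)
    (hmin : ∀ e ∈ H.edgeSet, ¬ TwoEdgeConnected (H.deleteEdges {e})) :
    H.support.ncard ≤ H.edgeSet.ncard ∧ H.edgeSet.ncard ≤ 2 * (H.support.ncard - 1) := by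
  classical
  open MyAux in
  obtain ⟨hnt, hconn, hdel⟩ := h2ec
  set S : Set V := H.support with hSdef
  have hSsub : H.support ⊆ S := le_rfl
  haveI : Nontrivial ↥S := Set.nontrivial_coe_sort.mpr hnt
  set G : SimpleGraph ↥S := H.induce S with hGdef
  set emb : Sym2 ↥S → Sym2 V := Sym2.map (Subtype.val : ↥S → V) with hembdef
  have hembinj : Function.Injective emb := Sym2.map.injective Subtype.val_injective
  -- adjacency transfer
  have hGadj : ∀ a b : ↥S, G.Adj a b ↔ H.Adj ↑a ↑b := fun a b => Iff.rfl
  -- edge set image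
  have hedge_image : emb '' G.edgeSet = H.edgeSet := by
    ext e
    constructor
    · rintro ⟨e', he', rfl⟩
      induction e' using Sym2.ind with
      | _ a b => exact he'
    · intro he
      induction e using Sym2.ind with
      | _ a b =>
        have hadj : H.Adj a b := he
        have ha : a ∈ S := ⟨b, hadj⟩
        have hb : b ∈ S := ⟨a, hadj.symm⟩
        exact ⟨s(⟨a, ha⟩, ⟨b, hb⟩), hadj, rfl⟩
  have hm : H.edgeSet.ncard = G.edgeSet.ncard := by
    rw [← hedge_image, Set.ncard_image_of_injective _ hembinj]
  have hn : S.ncard = Fintype.card ↥S := by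
    rw [Set.ncard_eq_toFinset_card', Set.toFinset_card]
  -- reachability transfers (specialized)
  have htrans : ∀ (s : Set (Sym2 ↥S)) (u v : ↥S),
      ((G.deleteEdges s).Reachable u v ↔
        (H.deleteEdges (emb '' s)).Reachable ↑u ↑v) := fun s u v =>
    reach_transfer hSsub s u v
  have hGreach : ∀ u v : ↥S, G.Reachable u v := by
    intro u v
    have h0 := (htrans ∅ u v)
    simp only [Set.image_empty, deleteEdges_empty] at h0
    exact h0.mpr (hconn _ u.2 _ v.2)
  have hGconn : G.Connected := by
    rw [connected_iff]
    exact ⟨hGreach, ⟨⟨_, hnt.nonempty.choose_spec⟩⟩⟩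
  -- single-edge deletion reachability in G
  have hdelG : ∀ e ∈ G.edgeSet, ∀ u v : ↥S, (G.deleteEdges {e}).Reachable u v := by
    intro e he u v
    have h1 := htrans {e} u v
    rw [Set.image_singleton] at h1
    refine h1.mpr (hdel (emb e) ?_ _ u.2 _ v.2)
    rw [← hedge_image]
    exact ⟨e, he, rfl⟩
  -- every cut of G has at least two edges
  have hcut2 : ∀ (A : Set ↥S), A.Nonempty → Aᶜ.Nonempty →
      ∀ e, G.edgeSet ∩ xcut A ⊆ {e} → False := by
    intro A hA hA' e hsub
    obtain ⟨e', he'G, he'x⟩ := cut_nonempty hGconn.preconnected hA hA'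
    have he'e : e' = e := hsub ⟨he'G, he'x⟩
    subst he'e
    obtain ⟨a, ha⟩ := hA
    obtain ⟨b, hb⟩ := hA'
    obtain ⟨p⟩ := hdelG e' he'G a b
    obtain ⟨x, y, hxy, hx, hy, -⟩ := walk_crossing p ha hb
    have hxyG : s(x, y) ∈ G.edgeSet ∩ xcut A :=
      ⟨(deleteEdges_le _ : G.deleteEdges {e'} ≤ G) hxy,
        mem_xcut_iff.mpr (Or.inl ⟨hx, hy⟩)⟩
    have : s(x, y) = e' := hsub hxyG
    rw [deleteEdges_adj] at hxy
    exact hxy.2 (by simp [this])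
  -- spanning tree
  obtain ⟨T, hTle, hTtree⟩ := exists_spanning_tree G hGconn
  have hTsub : T.edgeSet ⊆ G.edgeSet := edgeSet_mono hTle
  have hTcard : T.edgeSet.ncard + 1 = Fintype.card ↥S := by
    rw [Set.ncard_eq_toFinset_card']
    exact hTtree.card_edgeFinset
  have hcard2 : 2 ≤ Fintype.card ↥S := Fintype.one_lt_card
  -- ====== LOWER BOUND ======
  have hdeg : ∀ w : ↥S, 2 ≤ G.degree w := by
    intro w
    by_contra hlt
    push_neg at hlt
    obtain ⟨x, hx⟩ := w.2
    have hxS : x ∈ S := ⟨↑w, (hx : H.Adj ↑w x).symm⟩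
    have hadj : G.Adj w ⟨x, hxS⟩ := hx
    have hmem : (⟨x, hxS⟩ : ↥S) ∈ G.neighborFinset w := by
      rwa [mem_neighborFinset]
    have hcard1 : (G.neighborFinset w).card = 1 := by
      have : 1 ≤ (G.neighborFinset w).card := Finset.card_pos.mpr ⟨_, hmem⟩
      have h2 : (G.neighborFinset w).card < 2 := by
        rwa [← G.card_neighborFinset_eq_degree w] at hlt
      omega
    obtain ⟨y, hy⟩ := Finset.card_eq_one.mp hcard1
    have hxy : (⟨x, hxS⟩ : ↥S) = y := by
      rw [hy] at hmem; simpa using hmem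
    subst hxy
    -- the unique neighbor
    have huniq : ∀ z : ↥S, G.Adj w z → z = ⟨x, hxS⟩ := by
      intro z hz
      have : z ∈ G.neighborFinset w := by rwa [mem_neighborFinset]
      rw [hy] at this; simpa using this
    have heG : s(w, (⟨x, hxS⟩ : ↥S)) ∈ G.edgeSet := hadj
    obtain ⟨p⟩ := hdelG _ heG w ⟨x, hxS⟩
    have hne : w ≠ (⟨x, hxS⟩ : ↥S) := hadj.ne
    cases p with
    | nil => exact hne rfl
    | @cons _ b _ h q =>
      rw [deleteEdges_adj] at h
      have : b = ⟨x, hxS⟩ := huniq b h.1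
      subst this
      exact h.2 rfl
  have hlower : S.ncard ≤ H.edgeSet.ncard := by
    have hsum : ∑ v : ↥S, G.degree v = 2 * G.edgeFinset.card :=
      SimpleGraph.sum_degrees_eq_twice_card_edges G
    have hsum2 : 2 * Fintype.card ↥S ≤ ∑ v : ↥S, G.degree v := by
      calc 2 * Fintype.card ↥S = ∑ _v : ↥S, 2 := by
            simp [Finset.sum_const, mul_comm]
          _ ≤ ∑ v : ↥S, G.degree v := Finset.sum_le_sum fun v _ => hdeg v
    have hGm : G.edgeSet.ncard = G.edgeFinset.card := Set.ncard_eq_toFinset_card' _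
    omega
  refine ⟨hlower, ?_⟩
  -- ====== UPPER BOUND ======
  -- key step: each non-tree edge yields a tree edge whose joint removal disconnects
  have key : ∀ f : Sym2 ↥S, f ∈ G.edgeSet \ T.edgeSet →
      ∃ e, e ∈ T.edgeSet ∧ ∃ u v : ↥S, ¬(G.deleteEdges {f, e}).Reachable u v := by
    intro f hf
    obtain ⟨hfG, hfT⟩ := hf
    have hTGf : T ≤ G.deleteEdges {f} := by
      intro a b hab
      rw [deleteEdges_adj]
      exact ⟨hTle hab, by
        intro hc
        exact hfT (Set.mem_singleton_iff.mp hc ▸ (hab : s(a,b) ∈ T.edgeSet))⟩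
    have hfH : emb f ∈ H.edgeSet := by rw [← hedge_image]; exact ⟨f, hfG, rfl⟩
    set Hf := H.deleteEdges {emb f} with hHfdef
    -- support of Hf equals S
    have hsupp_f : Hf.support = S := by
      apply Set.Subset.antisymm
      · exact support_mono (deleteEdges_le _)
      · intro x hx
        obtain ⟨y, hy⟩ := exists_adj_of_connected hTtree.isConnected.preconnected (⟨x, hx⟩ : ↥S)
        have h1 : (G.deleteEdges {f}).Adj ⟨x, hx⟩ y := hTGf hy
        have h2 : Hf.Adj x ↑y := by
          have heq := induce_deleteEdges_eq H S {f}
          rw [Set.image_singleton] at heq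
          have := heq ▸ h1
          exact this
        exact ⟨↑y, h2⟩
    have hreach_f : ∀ u ∈ Hf.support, ∀ v ∈ Hf.support, Hf.Reachable u v := by
      rw [hsupp_f]
      intro u hu v hv
      have hr : (G.deleteEdges {f}).Reachable ⟨u, hu⟩ ⟨v, hv⟩ :=
        Reachable.mono hTGf (hTtree.isConnected.preconnected ⟨u, hu⟩ ⟨v, hv⟩)
      have h1 := htrans {f} ⟨u, hu⟩ ⟨v, hv⟩
      rw [Set.image_singleton] at h1
      exact h1.mp hr
    have htnt : Hf.support.Nontrivial := by rw [hsupp_f]; exact hnt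
    have h3 : ¬ (∀ e ∈ Hf.edgeSet, ∀ u ∈ Hf.support, ∀ v ∈ Hf.support,
        (Hf.deleteEdges {e}).Reachable u v) :=
      fun h => hmin (emb f) hfH ⟨htnt, hreach_f, h⟩
    push_neg at h3
    obtain ⟨e', he', u, hu, v, hv, hnr⟩ := h3
    -- e' is an edge of H distinct from emb f
    have he'H : e' ∈ H.edgeSet ∧ e' ≠ emb f := by
      have := he'
      rw [hHfdef, edgeSet_deleteEdges] at this
      exact ⟨this.1, fun hc => this.2 (by simp [hc])⟩
    obtain ⟨e, heG, hee'⟩ : ∃ e, e ∈ G.edgeSet ∧ emb e = e' := by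
      have : e' ∈ emb '' G.edgeSet := hedge_image ▸ he'H.1
      obtain ⟨e, h1, h2⟩ := this
      exact ⟨e, h1, h2⟩
    have hef : e ≠ f := fun hc => he'H.2 (by rw [← hee', hc])
    have huS : u ∈ S := hsupp_f ▸ hu
    have hvS : v ∈ S := hsupp_f ▸ hv
    -- transfer non-reachability
    have hnr' : ¬(G.deleteEdges {f, e}).Reachable ⟨u, huS⟩ ⟨v, hvS⟩ := by
      intro hr
      apply hnr
      have h1 := htrans {f, e} ⟨u, huS⟩ ⟨v, hvS⟩
      have himg : emb '' {f, e} = {emb f, e'} := by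
        rw [Set.image_insert_eq, Set.image_singleton, hee']
      rw [himg] at h1
      have h2 := h1.mp hr
      rw [hHfdef, deleteEdges_deleteEdges]
      have : ({emb f} ∪ {e'} : Set (Sym2 V)) = {emb f, e'} := by
        rw [Set.singleton_union]
      rw [this]
      exact h2
    -- e must be a tree edge
    have heT : e ∈ T.edgeSet := by
      by_contra heT
      apply hnr'
      have hTle2 : T ≤ G.deleteEdges {f, e} := by
        intro a b hab
        rw [deleteEdges_adj]
        refine ⟨hTle hab, ?_⟩
        intro hc
        rcases hc with hc | hc
        · exact hfT (hc ▸ (hab : s(a,b) ∈ T.edgeSet))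
        · exact heT (hc ▸ (hab : s(a,b) ∈ T.edgeSet))
      exact Reachable.mono hTle2 (hTtree.isConnected.preconnected _ _)
    exact ⟨e, heT, ⟨u, huS⟩, ⟨v, hvS⟩, hnr'⟩
  -- choose the map from non-tree edges to tree edges
  choose! phi hphi1 hphi2 using key
  -- injectivity via the symmetric-difference cut argument
  have hinj : Set.InjOn phi (G.edgeSet \ T.edgeSet) := by
    intro f1 hf1 f2 hf2 heq
    by_contra hne
    set e := phi f1 with hedef
    have heT : e ∈ T.edgeSet := hphi1 f1 hf1
    have hef1 : e ≠ f1 := fun hc => hf1.2 (hc ▸ heT)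
    have hef2 : e ≠ f2 := fun hc => hf2.2 (hc ▸ heT)
    obtain ⟨u1, v1, hr1⟩ := hphi2 f1 hf1
    obtain ⟨u2, v2, hr2⟩ := hphi2 f2 hf2
    rw [← heq] at hr2
    set A : Set ↥S := {x | (G.deleteEdges {f1, e}).Reachable u1 x} with hAdef
    set B : Set ↥S := {x | (G.deleteEdges {f2, e}).Reachable u2 x} with hBdef
    have hu1A : u1 ∈ A := Reachable.refl _
    have hv1A : v1 ∉ A := hr1
    have hu2B : u2 ∈ B := Reachable.refl _
    have hv2B : v2 ∉ B := hr2
    have hcutA : G.edgeSet ∩ xcut A ⊆ {f1, e} := cut_subset_deleted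
    have hcutB : G.edgeSet ∩ xcut B ⊆ {f2, e} := cut_subset_deleted
    -- both f1 and e cross A
    have hbothA : f1 ∈ xcut A ∧ e ∈ xcut A := by
      constructor
      · by_contra hc
        refine hcut2 A ⟨u1, hu1A⟩ ⟨v1, hv1A⟩ e (fun g hg => ?_)
        have hh := hcutA hg
        rw [Set.mem_insert_iff, Set.mem_singleton_iff] at hh
        rcases hh with h | h
        · exact absurd (h ▸ hg.2) hc
        · exact h
      · by_contra hc
        refine hcut2 A ⟨u1, hu1A⟩ ⟨v1, hv1A⟩ f1 (fun g hg => ?_)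
        have hh := hcutA hg
        rw [Set.mem_insert_iff, Set.mem_singleton_iff] at hh
        rcases hh with h | h
        · exact h
        · exact absurd (h ▸ hg.2) hc
    have hbothB : f2 ∈ xcut B ∧ e ∈ xcut B := by
      constructor
      · by_contra hc
        refine hcut2 B ⟨u2, hu2B⟩ ⟨v2, hv2B⟩ e (fun g hg => ?_)
        have hh := hcutB hg
        rw [Set.mem_insert_iff, Set.mem_singleton_iff] at hh
        rcases hh with h | h
        · exact absurd (h ▸ hg.2) hc
        · exact h
      · by_contra hc
        refine hcut2 B ⟨u2, hu2B⟩ ⟨v2, hv2B⟩ f2 (fun g hg => ?_)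
        have hh := hcutB hg
        rw [Set.mem_insert_iff, Set.mem_singleton_iff] at hh
        rcases hh with h | h
        · exact h
        · exact absurd (h ▸ hg.2) hc
    -- f1 does not cross B, f2 does not cross A
    have hf1B : f1 ∉ xcut B := by
      intro hc
      have hh := hcutB ⟨hf1.1, hc⟩
      rw [Set.mem_insert_iff, Set.mem_singleton_iff] at hh
      rcases hh with h | h
      · exact hne h
      · exact hef1 h.symm
    have hf2A : f2 ∉ xcut A := by
      intro hc
      have hh := hcutA ⟨hf2.1, hc⟩
      rw [Set.mem_insert_iff, Set.mem_singleton_iff] at hh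
      rcases hh with h | h
      · exact hne h.symm
      · exact hef2 h.symm
    -- symmetric difference
    set D : Set ↥S := {x | Xor' (x ∈ A) (x ∈ B)} with hDdef
    have hDmem : ∀ x : ↥S, x ∈ D ↔ Xor' (x ∈ A) (x ∈ B) := fun x => Iff.rfl
    -- f1 crosses D
    obtain ⟨a, b, hab, haA, hbA⟩ : ∃ a b, f1 = s(a, b) ∧ a ∈ A ∧ b ∉ A := hbothA.1
    have habB : (a ∈ B ↔ b ∈ B) := by
      rw [hab] at hf1B
      rw [mem_xcut_iff] at hf1B
      tauto
    have hf1D : ((a ∈ D ∧ b ∉ D) ∨ (b ∈ D ∧ a ∉ D)) := by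
      by_cases haB : a ∈ B
      · refine Or.inr ⟨(hDmem b).mpr (Or.inr ⟨habB.mp haB, hbA⟩), fun hx => ?_⟩
        exact ((hDmem a).mp hx).elim (fun h => h.2 haB) (fun h => h.2 haA)
      · refine Or.inl ⟨(hDmem a).mpr (Or.inl ⟨haA, haB⟩), fun hx => ?_⟩
        exact ((hDmem b).mp hx).elim (fun h => absurd h.1 hbA)
          (fun h => habB.mpr h.1 |> haB)
    have hf1xD : f1 ∈ xcut D := by
      rw [hab, mem_xcut_iff]
      exact hf1D
    have hDne : D.Nonempty ∧ Dᶜ.Nonempty := by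
      rcases hf1D with ⟨h1, h2⟩ | ⟨h1, h2⟩
      · exact ⟨⟨a, h1⟩, ⟨b, h2⟩⟩
      · exact ⟨⟨b, h1⟩, ⟨a, h2⟩⟩
    -- cut of D is contained in {f1, f2}
    have hcutD : G.edgeSet ∩ xcut D ⊆ {f1, f2} := by
      rintro g ⟨hgG, hgD⟩
      obtain ⟨x, y, rfl, hx, hy⟩ := hgD
      have hx' : Xor' (x ∈ A) (x ∈ B) := (hDmem x).mp hx
      have hy' : ¬Xor' (y ∈ A) (y ∈ B) := fun hc => hy ((hDmem y).mpr hc)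
      have hcross := xor_cross (x ∈ A) (y ∈ A) (x ∈ B) (y ∈ B) hx' hy'
      rcases hcross with hcr | hcr
      · have hmem2 : s(x, y) ∈ ({f1, e} : Set (Sym2 ↥S)) :=
          hcutA ⟨hgG, mem_xcut_iff.mpr hcr⟩
        rw [Set.mem_insert_iff, Set.mem_singleton_iff] at hmem2
        rcases hmem2 with h | h
        · exact Or.inl h
        · exfalso
          have heBxy : (x ∈ B ∧ y ∉ B) ∨ (y ∈ B ∧ x ∉ B) := by
            have h2 := hbothB.2
            rw [← h, mem_xcut_iff] at h2
            exact h2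
          exact xor_cross_both (x ∈ A) (y ∈ A) (x ∈ B) (y ∈ B) hcr heBxy hx' hy'
      · have hmem2 : s(x, y) ∈ ({f2, e} : Set (Sym2 ↥S)) :=
          hcutB ⟨hgG, mem_xcut_iff.mpr hcr⟩
        rw [Set.mem_insert_iff, Set.mem_singleton_iff] at hmem2
        rcases hmem2 with h | h
        · exact Or.inr h
        · exfalso
          have heAxy : (x ∈ A ∧ y ∉ A) ∨ (y ∈ A ∧ x ∉ A) := by
            have h2 := hbothA.2
            rw [← h, mem_xcut_iff] at h2
            exact h2
          exact xor_cross_both (x ∈ A) (y ∈ A) (x ∈ B) (y ∈ B) heAxy hcr hx' hy'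
    -- but the spanning tree must cross D : contradiction
    obtain ⟨g, hgT, hgD⟩ := cut_nonempty hTtree.isConnected.preconnected hDne.1 hDne.2
    have hgmem : g ∈ ({f1, f2} : Set (Sym2 ↥S)) := hcutD ⟨hTsub hgT, hgD⟩
    rw [Set.mem_insert_iff, Set.mem_singleton_iff] at hgmem
    rcases hgmem with h | h
    · exact hf1.2 (h ▸ hgT)
    · exact hf2.2 (h ▸ hgT)
  -- counting
  have hmaps : ∀ f ∈ G.edgeSet \ T.edgeSet, phi f ∈ T.edgeSet := fun f hf => hphi1 f hf
  have hcount : (G.edgeSet \ T.edgeSet).ncard ≤ T.edgeSet.ncard :=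
    Set.ncard_le_ncard_of_injOn phi hmaps hinj (Set.toFinite _)
  have hsplit : (G.edgeSet \ T.edgeSet).ncard + T.edgeSet.ncard = G.edgeSet.ncard :=
    Set.ncard_diff_add_ncard_of_subset hTsub (Set.toFinite _)
  omega
end

section
/- Let T be a tree, F an edge set on V(T), s,t ∈ V(T), P the s–t path in T, and H the bipartite graph on F ∪ V(T) with edges {fv : v lies on T_f}. If t is not reachable from s in H, then there exists an edge on P that is covered by no f ∈ F. -/
open SimpleGraph
variable {V : Type*}
/-- The bipartite incidence graph on `F ⊕ V`. -/
noncomputable def incGraph (T : SimpleGraph V) (hT : T.IsTree) (F : Set (V × V)) :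
    SimpleGraph ((V × V) ⊕ V) :=
  SimpleGraph.fromRel (fun a b =>
    match a, b with
    | Sum.inl f, Sum.inr v => f ∈ F ∧ v ∈ pathSupport T hT f
    | _, _ => False)

lemma incGraph_adj (T : SimpleGraph V) (hT : T.IsTree) (F : Set (V × V))
    {f : V × V} {v : V} (hf : f ∈ F) (hv : v ∈ pathSupport T hT f) :
    (incGraph T hT F).Adj (Sum.inl f) (Sum.inr v) := by
  simp only [incGraph, SimpleGraph.fromRel_adj]
  exact ⟨by simp, Or.inl ⟨hf, hv⟩⟩

lemma walk_reachable (T : SimpleGraph V) (hT : T.IsTree) (F : Set (V × V))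
    {a b : V} (p : T.Walk a b)
    (hcov : ∀ e ∈ p.edges, ∃ f ∈ F, e ∈ pathEdges T hT f) :
    (incGraph T hT F).Reachable (Sum.inr a) (Sum.inr b) := by
  induction p with
  | nil => exact Reachable.refl _
  | cons h p ih =>
    rename_i u v w
    obtain ⟨f, hf, he⟩ := hcov s(u, v) (by simp)
    have hu : u ∈ pathSupport T hT f :=
      SimpleGraph.Walk.fst_mem_support_of_mem_edges _ he
    have hv : v ∈ pathSupport T hT f :=
      SimpleGraph.Walk.snd_mem_support_of_mem_edges _ he
    have h1 : (incGraph T hT F).Reachable (Sum.inr u) (Sum.inr v) :=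
      ((incGraph_adj T hT F hf hu).symm.toWalk.append
        (incGraph_adj T hT F hf hv).toWalk).reachable
    exact h1.trans (ih (fun e hep => hcov e (by simp [hep])))

/-- If `t` is not reachable from `s` in the auxiliary bipartite graph `H`, then some edge
of the `s`–`t` tree path is covered by no `f ∈ F`. -/
theorem stmt9 (T : SimpleGraph V) (hT : T.IsTree) (F : Set (V × V)) (s t : V)
    (hnr : ¬ (incGraph T hT F).Reachable (Sum.inr s) (Sum.inr t)) :
    ∃ e ∈ (treeWalk T hT s t).edges, ∀ f ∈ F, e ∉ pathEdges T hT f := by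
  by_contra hcon
  push_neg at hcon
  exact hnr (walk_reachable T hT F (treeWalk T hT s t) fun e he =>
    (hcon e he).imp fun f hf => hf)
end

section
/- Let G=(V,E) be a graph, T a spanning tree of G with stretch σ (i.e., the tree path T_f has at most σ edges for every f ∈ E∖E(T)). Let (S,J) be a 2-edge-connected subgraph of G whose vertex set S dominates V, and let F ⊆ E∖E(T) be any edge set with |F| ≤ ρ|J∖E(T)| such that T_F is a dominating tree. Then T_F ∪ F is a 2-edge-connected subgraph of G whose vertex set dominates V, and its number of edges satisfies |F| + |E(T_F)| ≤ ρ(σ+1)|J|. -/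
open SimpleGraph
variable {V : Type*}
lemma reach_del {G : SimpleGraph V} {e : Sym2 V}
    (h : ∀ a b : V, G.Adj a b → s(a,b) = e → (G.deleteEdges {e}).Reachable a b)
    {u v : V} (huv : G.Reachable u v) : (G.deleteEdges {e}).Reachable u v := by
  obtain ⟨p⟩ := huv
  induction p with
  | nil => exact Reachable.refl _
  | @cons a b c hab p ih =>
    by_cases hc : s(a,b) = e
    · exact (h a b hab hc).trans ih
    · exact (SimpleGraph.Adj.reachable
        (by rw [SimpleGraph.deleteEdges_adj]; exact ⟨hab, by simp [hc]⟩)).trans ih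

lemma exists_edge_of_ne {G : SimpleGraph V} {x y : V} (p : G.Walk x y) (h : x ≠ y) :
    ∃ z, s(x,z) ∈ p.edges := by
  cases p with
  | nil => exact absurd rfl h
  | @cons _ z _ h' q => exact ⟨z, by simp⟩

/-- Combining the reductions: if `T` is a spanning tree of `G` with stretch `σ`,
`(S,J)` is a 2-edge-connected dominating subgraph of `G`, and `F` is a set of non-tree
edges with `|F| ≤ ρ·|J \ E_T|` such that `T_F` is a dominating tree, then `T_F ∪ F` is a
2-edge-connected subgraph of `G` whose vertex set dominates `V`, with
`|F| + |E(T_F)| ≤ ρ(σ+1)|J|`. -/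
theorem stmt12 [Fintype V] [DecidableEq V] (G T : SimpleGraph V) [DecidableRel T.Adj]
    (hle : T ≤ G) (hT : T.IsTree) (σ : ℕ)
    (hstretch : ∀ u v : V, G.Adj u v → ¬ T.Adj u v → (treeWalk T hT u v).edges.length ≤ σ)
    (J : Finset (V × V)) (hJG : ∀ e ∈ J, G.Adj e.1 e.2)
    (h2ecJ : TwoEdgeConnected (pairGraph (↑J : Set (V × V))))
    (hdomJ : ∀ v : V, v ∈ (pairGraph (↑J : Set (V × V))).support ∨
      ∃ u ∈ (pairGraph (↑J : Set (V × V))).support, G.Adj v u)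
    (ρ : ℝ) (hρ : 0 ≤ ρ)
    (F : Finset (V × V)) (hF : ∀ f ∈ F, G.Adj f.1 f.2 ∧ ¬ T.Adj f.1 f.2)
    (hFcard : (F.card : ℝ) ≤ ρ * (J.filter (fun e => ¬ T.Adj e.1 e.2)).card)
    (htree : ConnOn (unionPaths T hT ↑F))
    (hdomF : ∀ v : V, v ∈ (unionPaths T hT ↑F).support ∨
      ∃ u ∈ (unionPaths T hT ↑F).support, G.Adj v u) :
    TwoEdgeConnected (unionPaths T hT ↑F ⊔ pairGraph ↑F) ∧
      (unionPaths T hT ↑F ⊔ pairGraph ↑F) ≤ G ∧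
      (∀ v : V, v ∈ (unionPaths T hT ↑F ⊔ pairGraph (↑F : Set (V × V))).support ∨
        ∃ u ∈ (unionPaths T hT ↑F ⊔ pairGraph (↑F : Set (V × V))).support, G.Adj v u) ∧
      (F.card : ℝ) + ((unionPaths T hT (↑F : Set (V × V))).edgeSet.ncard : ℝ) ≤
        ρ * (σ + 1) * J.card := by
  classical
  set U : SimpleGraph V := unionPaths T hT ↑F with hU
  set P : SimpleGraph V := pairGraph (↑F : Set (V × V)) with hP
  set H : SimpleGraph V := U ⊔ P with hH
  -- walks
  have hwpath : ∀ f : V × V, (treeWalk T hT f.1 f.2).IsPath := fun f =>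
    (hT.existsUnique_path f.1 f.2).choose_spec.1
  -- path edges are edges of U
  have hpathU : ∀ f ∈ F, ∀ e ∈ (treeWalk T hT f.1 f.2).edges, e ∈ U.edgeSet := by
    intro f hf e he
    rw [hU, unionPaths, edgeSet_fromEdgeSet]
    constructor
    · exact Set.mem_biUnion hf he
    · induction e with
      | h x y =>
        simp only [Set.mem_setOf_eq, Sym2.mem_diagSet, Sym2.isDiag_iff_proj_eq]
        exact ((treeWalk T hT f.1 f.2).adj_of_mem_edges he).ne
  have hUle : U ≤ H := le_sup_left
  have hPle : P ≤ H := le_sup_right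
  -- pair edges are H-adjacencies
  have hPadj : ∀ f ∈ F, P.Adj f.1 f.2 := by
    intro f hf
    rw [hP, pairGraph, fromEdgeSet_adj]
    exact ⟨⟨f, by exact_mod_cast hf, rfl⟩, ((hF f hf).1).ne⟩
  -- the cycle through T_f and f
  have hcyc : ∀ f ∈ F, ∃ c : H.Walk f.2 f.2, c.IsCycle ∧
      s(f.1, f.2) ∈ c.edges ∧ ∀ e ∈ (treeWalk T hT f.1 f.2).edges, e ∈ c.edges := by
    intro f hf
    have hwe : ∀ e ∈ (treeWalk T hT f.1 f.2).edges, e ∈ H.edgeSet := fun e he =>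
      edgeSet_mono hUle (hpathU f hf e he)
    set w' : H.Walk f.1 f.2 := (treeWalk T hT f.1 f.2).transfer H hwe with hw'
    have hadj : H.Adj f.2 f.1 := (hPle (hPadj f hf)).symm
    refine ⟨SimpleGraph.Walk.cons hadj w', ?_, ?_, ?_⟩
    · rw [SimpleGraph.Walk.cons_isCycle_iff]
      refine ⟨(hwpath f).transfer hwe, ?_⟩
      rw [SimpleGraph.Walk.edges_transfer]
      intro hmem
      exact (hF f hf).2 ((treeWalk T hT f.1 f.2).adj_of_mem_edges hmem).symm
    · rw [SimpleGraph.Walk.edges_cons, Sym2.eq_swap]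
      exact List.mem_cons_self
    · intro e he
      rw [SimpleGraph.Walk.edges_cons]
      exact List.mem_cons_of_mem _ (by rwa [SimpleGraph.Walk.edges_transfer])
  -- every edge of H lies on a cycle
  have hkey : ∀ a b : V, H.Adj a b → (H.deleteEdges {s(a,b)}).Reachable a b := by
    intro a b hab
    have he : s(a,b) ∈ H.edgeSet := hab
    rw [hH, edgeSet_sup] at he
    have : ∃ f ∈ F, ∃ c : H.Walk f.2 f.2, c.IsCycle ∧ s(a,b) ∈ c.edges := by
      rcases he with he | he
      · rw [hU, unionPaths, edgeSet_fromEdgeSet] at he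
        obtain ⟨he1, -⟩ := he
        simp only [Set.mem_iUnion] at he1
        obtain ⟨f, hf, hef⟩ := he1
        have hf' : f ∈ F := by exact_mod_cast hf
        obtain ⟨c, hc, -, hall⟩ := hcyc f hf'
        exact ⟨f, hf', c, hc, hall _ hef⟩
      · rw [hP, pairGraph, edgeSet_fromEdgeSet] at he
        obtain ⟨⟨f, hf, hef⟩, -⟩ := he
        have hf' : f ∈ F := by exact_mod_cast hf
        obtain ⟨c, hc, hmem, -⟩ := hcyc f hf'
        exact ⟨f, hf', c, hc, hef ▸ hmem⟩
    obtain ⟨f, -, c, hc, hmem⟩ := this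
    exact (SimpleGraph.adj_and_reachable_delete_edges_iff_exists_cycle.mpr
      ⟨f.2, c, hc, hmem⟩).2
  -- supports
  have hPsubU : P.support ⊆ U.support := by
    intro x hx
    obtain ⟨y, hxy⟩ := P.mem_support.mp hx
    rw [hP, pairGraph, fromEdgeSet_adj] at hxy
    obtain ⟨⟨f, hf, hef⟩, -⟩ := hxy
    have hf' : f ∈ F := by exact_mod_cast hf
    have hne : f.1 ≠ f.2 := ((hF f hf').1).ne
    have h1 : f.1 ∈ U.support := by
      obtain ⟨z, hz⟩ := exists_edge_of_ne (treeWalk T hT f.1 f.2) hne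
      exact ⟨z, U.mem_edgeSet.mp (hpathU f hf' _ hz)⟩
    have h2 : f.2 ∈ U.support := by
      obtain ⟨z, hz⟩ := exists_edge_of_ne (treeWalk T hT f.1 f.2).reverse hne.symm
      rw [SimpleGraph.Walk.edges_reverse, List.mem_reverse] at hz
      exact ⟨z, U.mem_edgeSet.mp (hpathU f hf' _ hz)⟩
    rw [Sym2.eq_iff] at hef
    rcases hef with ⟨rfl, -⟩ | ⟨rfl, -⟩
    · exact h1
    · exact h2
  have hsupH : H.support = U.support := by
    apply Set.Subset.antisymm
    · intro x hx
      obtain ⟨y, hxy⟩ := hx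
      rcases hxy with hxy | hxy
      · exact ⟨y, hxy⟩
      · exact hPsubU ⟨y, hxy⟩
    · exact support_mono hUle
  -- connectivity of H on its support
  have hconn : ∀ u ∈ H.support, ∀ v ∈ H.support, H.Reachable u v := by
    intro u hu v hv
    rw [hsupH] at hu hv
    exact (htree.2 u hu v hv).mono hUle
  refine ⟨⟨?_, hconn, ?_⟩, ?_, ?_, ?_⟩
  · -- nontrivial support
    obtain ⟨u, hu⟩ := htree.1
    obtain ⟨v, huv⟩ := U.mem_support.mp hu
    refine ⟨u, ?_, v, ?_, huv.ne⟩
    · rw [hsupH]; exact ⟨v, huv⟩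
    · rw [hsupH]; exact ⟨u, huv.symm⟩
  · -- 2-edge-connectivity
    intro e he u hu v hv
    refine reach_del ?_ (hconn u hu v hv)
    intro a b hab hab'
    rw [← hab']
    exact hkey a b hab
  · -- subgraph of G
    rw [hH]
    refine sup_le ?_ ?_
    · intro a b hab
      rw [hU, unionPaths, fromEdgeSet_adj] at hab
      obtain ⟨h1, -⟩ := hab
      simp only [Set.mem_iUnion] at h1
      obtain ⟨f, hf, hef⟩ := h1
      exact hle ((treeWalk T hT f.1 f.2).adj_of_mem_edges hef)
    · intro a b hab
      rw [hP, pairGraph, fromEdgeSet_adj] at hab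
      obtain ⟨⟨f, hf, hef⟩, -⟩ := hab
      have hf' : f ∈ F := by exact_mod_cast hf
      rw [Sym2.eq_iff] at hef
      rcases hef with ⟨rfl, rfl⟩ | ⟨rfl, rfl⟩
      · exact (hF f hf').1
      · exact (hF f hf').1.symm
  · -- domination
    intro v
    rcases hdomF v with h | ⟨u, hu, hadj⟩
    · exact Or.inl (support_mono hUle h)
    · exact Or.inr ⟨u, support_mono hUle hu, hadj⟩
  · -- cardinality bound
    have hEset : U.edgeSet ⊆
        ↑(F.biUnion fun f => (treeWalk T hT f.1 f.2).edges.toFinset) := by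
      rw [hU, unionPaths, edgeSet_fromEdgeSet]
      intro e he
      obtain ⟨he1, -⟩ := he
      simp only [Set.mem_iUnion] at he1
      obtain ⟨f, hf, hef⟩ := he1
      have hf' : f ∈ F := by exact_mod_cast hf
      simp only [Finset.coe_biUnion, Set.mem_iUnion, Finset.mem_coe, List.mem_toFinset]
      exact ⟨f, hf', hef⟩
    have hcount : U.edgeSet.ncard ≤ σ * F.card := by
      calc U.edgeSet.ncard
          ≤ (F.biUnion fun f => (treeWalk T hT f.1 f.2).edges.toFinset).card := by
            rw [← Set.ncard_coe_finset]
            exact Set.ncard_le_ncard hEset (Set.toFinite _)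
        _ ≤ ∑ f ∈ F, (treeWalk T hT f.1 f.2).edges.toFinset.card :=
            Finset.card_biUnion_le
        _ ≤ ∑ _f ∈ F, σ := by
            refine Finset.sum_le_sum fun f hf => ?_
            exact le_trans (List.toFinset_card_le _)
              (hstretch f.1 f.2 (hF f hf).1 (hF f hf).2)
        _ = σ * F.card := by rw [Finset.sum_const, smul_eq_mul, mul_comm]
    have h1 : ((J.filter (fun e => ¬ T.Adj e.1 e.2)).card : ℝ) ≤ (J.card : ℝ) := by
      exact_mod_cast Finset.card_filter_le _ _
    have hcount' : (U.edgeSet.ncard : ℝ) ≤ (σ : ℝ) * F.card := by exact_mod_cast hcount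
    have hσ : (0:ℝ) ≤ (σ:ℝ) + 1 := by positivity
    calc (F.card : ℝ) + (U.edgeSet.ncard : ℝ)
        ≤ (F.card : ℝ) + (σ : ℝ) * F.card := by linarith
      _ = ((σ:ℝ) + 1) * F.card := by ring
      _ ≤ ((σ:ℝ) + 1) * (ρ * (J.filter (fun e => ¬ T.Adj e.1 e.2)).card) :=
          mul_le_mul_of_nonneg_left hFcard hσ
      _ = ρ * ((σ:ℝ) + 1) * (J.filter (fun e => ¬ T.Adj e.1 e.2)).card := by ring
      _ ≤ ρ * ((σ:ℝ) + 1) * J.card :=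
          mul_le_mul_of_nonneg_left h1 (by positivity)
end

section
/- Let T be a tree on V, E a set of non-tree edges, and let e ∈ E with T_e the tree path of e. Suppose v ∈ V is a vertex not on T_e but adjacent in T (via tree edge uv) to a vertex u ∈ T_e, and suppose no edge f ∈ E satisfies both v ∈ T_f and V(T_f) ∩ V(T_e) ≠ ∅. Then no edge of E has its endpoints in distinct components of T − uv; i.e., uv is a bridge of the graph T ∪ E. -/
open SimpleGraph
variable {V : Type*}
private lemma reachable_trans_aux {G H : SimpleGraph V}
    (hGH : ∀ a b, G.Adj a b → H.Reachable a b) {x y : V} (h : G.Reachable x y) :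
    H.Reachable x y := by
  obtain ⟨p⟩ := h
  induction p with
  | nil => exact Reachable.refl _
  | cons h p ih => exact (hGH _ _ h).trans ih

/-- If `v` lies off the tree path `T_e` but is joined by the tree edge `uv` to `u ∈ T_e`,
and no `f ∈ E'` satisfies both `v ∈ T_f` and `T_f ∩ T_e ≠ ∅`, then every `f ∈ E'` has
both endpoints in the same component of `T − uv`; hence `uv` is a bridge of `T ∪ E'`. -/
theorem stmt17 (T : SimpleGraph V) (hT : T.IsTree)
    (E' : Set (V × V)) (hE' : ∀ f ∈ E', ¬ T.Adj f.1 f.2)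
    (e : V × V) (he : e ∈ E') (u v : V)
    (hu : u ∈ pathSupport T hT e) (hv : v ∉ pathSupport T hT e) (huv : T.Adj u v)
    (hno : ¬ ∃ f ∈ E', v ∈ pathSupport T hT f ∧
      (pathSupport T hT f ∩ pathSupport T hT e).Nonempty) :
    (∀ f ∈ E', (T.deleteEdges {s(u, v)}).Reachable f.1 f.2) ∧
      ¬ ((T ⊔ pairGraph E').deleteEdges {s(u, v)}).Reachable u v := by
  have key : ∀ f ∈ E', (T.deleteEdges {s(u, v)}).Reachable f.1 f.2 := by
    intro f hf
    have hedge : s(u, v) ∉ (treeWalk T hT f.1 f.2).edges := by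
      intro hmem
      apply hno
      refine ⟨f, hf, ?_, ⟨u, ?_, hu⟩⟩
      · exact (treeWalk T hT f.1 f.2).snd_mem_support_of_mem_edges hmem
      · exact (treeWalk T hT f.1 f.2).fst_mem_support_of_mem_edges hmem
    exact ⟨(treeWalk T hT f.1 f.2).toDeleteEdges {s(u, v)}
      (fun e' he' h1 => hedge (h1 ▸ he'))⟩
  refine ⟨key, ?_⟩
  intro hreach
  have hbridge : T.IsBridge s(u, v) :=
    (isAcyclic_iff_forall_adj_isBridge.mp hT.IsAcyclic) huv
  have : (T.deleteEdges {s(u, v)}).Reachable u v := by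
    refine reachable_trans_aux ?_ hreach
    intro a b hab
    rw [deleteEdges_adj] at hab
    obtain ⟨hab, hne⟩ := hab
    rcases hab with hT' | hP
    · exact ⟨Walk.cons (deleteEdges_adj.mpr ⟨hT', hne⟩) Walk.nil⟩
    · rw [pairGraph, fromEdgeSet_adj] at hP
      obtain ⟨⟨f, hf, hf2⟩, _⟩ := hP
      rw [Sym2.eq_iff] at hf2
      rcases hf2 with ⟨rfl, rfl⟩ | ⟨rfl, rfl⟩
      · exact key f hf
      · exact (key f hf).symm
  exact hbridge this
end
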